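/- arXiv:2402.08545 — 6 statements merged into one kernel-verified Lean document; each statement's English description precedes it below -/
import Mathlib

section
/- For any Hermitian positive definite matrix A ∈ C^{d×d}, the condition number κ(A) = λ_max(A)/λ_min(A) satisfies κ(A) ≤ (1+x)/(1−x), where x = sqrt(1 − (d/tr(A))^d · det(A)). -/
open Matrix
open scoped ComplexOrder

/-- Unweighted AM-GM for `d` nonnegative reals. -/
private lemma amgm_aux {d : ℕ} (hd : 0 < d) (z : Fin d → ℝ) (hz : ∀ i, 0 ≤ z i) :
    ∏ i, z i ≤ ((∑ i, z i) / d) ^ d := by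
  have hd' : (d : ℝ) ≠ 0 := Nat.cast_ne_zero.mpr hd.ne'
  have hws : ∑ _i : Fin d, ((d : ℝ)⁻¹) = 1 := by
    rw [Finset.sum_const, Finset.card_univ, Fintype.card_fin, nsmul_eq_mul,
      mul_inv_cancel₀ hd']
  have h := Real.geom_mean_le_arith_mean_weighted Finset.univ (fun _ => (d : ℝ)⁻¹) z
    (fun i _ => by positivity) hws (fun i _ => hz i)
  have hsum : ∑ i, (d : ℝ)⁻¹ * z i = (∑ i, z i) / d := by
    rw [← Finset.mul_sum]
    ring
  rw [hsum] at h
  have hprod : ∀ i : Fin d, (z i ^ ((d : ℝ)⁻¹)) ^ d = z i := by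
    intro i
    rw [← Real.rpow_natCast (z i ^ ((d : ℝ)⁻¹)) d, ← Real.rpow_mul (hz i),
      inv_mul_cancel₀ hd', Real.rpow_one]
  calc ∏ i, z i = ∏ i, (z i ^ ((d : ℝ)⁻¹)) ^ d := by
        exact Finset.prod_congr rfl fun i _ => (hprod i).symm
    _ = (∏ i, z i ^ ((d : ℝ)⁻¹)) ^ d := by rw [Finset.prod_pow]
    _ ≤ ((∑ i, z i) / d) ^ d := by
        apply pow_le_pow_left₀ _ h
        exact Finset.prod_nonneg fun i _ => Real.rpow_nonneg (hz i) _

/-- Condition number bound: for a Hermitian positive definite `A ∈ ℂ^{d×d}`,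
`λ_max(A)/λ_min(A) ≤ (1+x)/(1−x)` where `x = sqrt(1 − (d/tr A)^d · det A)`. -/
theorem stmt2 {d : ℕ} (hd : 0 < d) (A : Matrix (Fin d) (Fin d) ℂ)
    (hA : A.PosDef) :
    (⨆ i, hA.1.eigenvalues i) / (⨅ i, hA.1.eigenvalues i) ≤
      (1 + Real.sqrt (1 - ((d : ℝ) / A.trace.re) ^ d * A.det.re)) /
        (1 - Real.sqrt (1 - ((d : ℝ) / A.trace.re) ^ d * A.det.re)) := by
  classical
  have hne : Nonempty (Fin d) := ⟨⟨0, hd⟩⟩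
  set f := hA.1.eigenvalues with hf_def
  have hfpos : ∀ i, 0 < f i := fun i => hA.eigenvalues_pos i
  set S := ∑ i, f i with hS_def
  set P := ∏ i, f i with hP_def
  have hSpos : 0 < S := Finset.sum_pos (fun i _ => hfpos i) Finset.univ_nonempty
  have hPpos : 0 < P := Finset.prod_pos (fun i _ => hfpos i)
  have hd' : (0 : ℝ) < d := Nat.cast_pos.mpr hd
  -- trace and determinant in terms of eigenvalues
  have htrC : A.trace = ∑ i, (f i : ℂ) := by
    exact hA.1.trace_eq_sum_eigenvalues
  have htr : A.trace.re = S := by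
    rw [htrC]
    simp [hS_def]
  have hdet : A.det.re = P := by
    rw [hA.1.det_eq_prod_eigenvalues]
    norm_cast
  -- sup and inf are attained
  obtain ⟨i1, hi1⟩ := Finite.exists_max f
  obtain ⟨i0, hi0⟩ := Finite.exists_min f
  set a := f i0 with ha_def
  set b := f i1 with hb_def
  have hab : a ≤ b := hi0 i1
  have hapos : 0 < a := hfpos i0
  have hbpos : 0 < b := hfpos i1
  have hsup : (⨆ i, f i) = b :=
    le_antisymm (ciSup_le hi1) (le_ciSup (Set.Finite.bddAbove (Set.finite_range f)) i1)
  have hinf : (⨅ i, f i) = a :=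
    le_antisymm (ciInf_le (Set.Finite.bddBelow (Set.finite_range f)) i0) (le_ciInf hi0)
  set M : ℝ := (S / d) ^ d with hM_def
  have hMpos : 0 < M := by positivity
  have hyM : ((d : ℝ) / S) ^ d * P = P / M := by
    rw [hM_def, div_pow, div_pow]
    field_simp
  -- key inequality
  have hkey : ((b - a) / (a + b)) ^ 2 ≤ 1 - P / M := by
    rcases eq_or_lt_of_le hab with he | hlt
    · have hPM : P ≤ M := amgm_aux hd f (fun i => (hfpos i).le)
      have h1 : P / M ≤ 1 := (div_le_one hMpos).mpr hPM
      rw [← he]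
      simp
      linarith
    · have hne01 : i0 ≠ i1 := by
        intro h
        rw [ha_def, hb_def, h] at hlt
        exact lt_irrefl _ hlt
      -- modified tuple
      set c : ℝ := (a + b) / 2 with hc_def
      set g : Fin d → ℝ := Function.update (Function.update f i0 c) i1 c with hg_def
      have hgnn : ∀ i, 0 ≤ g i := by
        intro i
        rw [hg_def]
        simp only [Function.update_apply]
        split_ifs <;> [positivity; positivity; exact (hfpos i).le]
      have hi0mem : i0 ∈ Finset.univ \ {i1} := by
        simp [hne01]
      -- sum of g
      have hupd_ne : ∀ x ∈ (Finset.univ \ {i1} : Finset (Fin d)),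
          Function.update f i0 c x = Function.update f i0 c x := fun _ _ => rfl
      have hsumg : ∑ i, g i = S := by
        rw [hg_def, Finset.sum_update_of_mem (Finset.mem_univ i1)]
        rw [Finset.sum_eq_add_sum_sdiff_singleton_of_mem hi0mem]
        rw [Function.update_self]
        have : ∑ x ∈ (Finset.univ \ {i1}) \ {i0}, Function.update f i0 c x
            = ∑ x ∈ (Finset.univ \ {i1}) \ {i0}, f x := by
          apply Finset.sum_congr rfl
          intro x hx
          rw [Function.update_of_ne]
          intro hxe
          rw [hxe] at hx
          simp at hx
        rw [this, hS_def, Finset.sum_eq_add_sum_sdiff_singleton_of_mem (Finset.mem_univ i1),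
          Finset.sum_eq_add_sum_sdiff_singleton_of_mem hi0mem]
        rw [hc_def]
        ring
      -- product of g
      have hprodg : ∏ i, g i = c * (c * ∏ x ∈ (Finset.univ \ {i1}) \ {i0}, f x) := by
        rw [hg_def, Finset.prod_update_of_mem (Finset.mem_univ i1)]
        rw [Finset.prod_eq_mul_prod_sdiff_singleton_of_mem hi0mem]
        rw [Function.update_self]
        congr 1
        congr 1
        apply Finset.prod_congr rfl
        intro x hx
        rw [Function.update_of_ne]
        intro hxe
        rw [hxe] at hx
        simp at hx
      set Q : ℝ := ∏ x ∈ (Finset.univ \ {i1}) \ {i0}, f x with hQ_def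
      have hQpos : 0 < Q := Finset.prod_pos (fun i _ => hfpos i)
      have hPabQ : P = b * (a * Q) := by
        rw [hP_def, Finset.prod_eq_mul_prod_sdiff_singleton_of_mem (Finset.mem_univ i1),
          Finset.prod_eq_mul_prod_sdiff_singleton_of_mem hi0mem]
      have hAM : c * (c * Q) ≤ M := by
        have := amgm_aux hd g hgnn
        rw [hprodg, hsumg] at this
        exact this
      -- conclude
      have habpos : (0 : ℝ) < a + b := by linarith
      have hcpos : 0 < c := by rw [hc_def]; positivity
      have hccQ : 0 < c * (c * Q) := by positivity
      have h1 : P / M ≤ P / (c * (c * Q)) :=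
        div_le_div_of_nonneg_left hPpos.le hccQ hAM
      have h2 : P / (c * (c * Q)) = 4 * a * b / (a + b) ^ 2 := by
        rw [hPabQ, hc_def]
        field_simp
        ring
      have h3 : ((b - a) / (a + b)) ^ 2 = 1 - 4 * a * b / (a + b) ^ 2 := by
        field_simp
        ring
      rw [h3]
      rw [h2] at h1
      linarith
  -- finish
  rw [htr, hdet, hyM, hsup, hinf]
  set x := Real.sqrt (1 - P / M) with hx_def
  have hx0 : 0 ≤ x := Real.sqrt_nonneg _
  have hyPos : 0 < P / M := div_pos hPpos hMpos
  have hyle : P / M ≤ 1 := by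
    have h0 : (0 : ℝ) ≤ ((b - a) / (a + b)) ^ 2 := sq_nonneg _
    linarith
  have hx1 : x < 1 := by
    have h := Real.sqrt_lt_sqrt (by linarith : (0:ℝ) ≤ 1 - P / M)
      (by linarith : 1 - P / M < 1)
    rwa [Real.sqrt_one] at h
  have habpos : (0 : ℝ) < a + b := by linarith
  have hmain : (b - a) / (a + b) ≤ x := by
    have h0 : 0 ≤ (b - a) / (a + b) := div_nonneg (by linarith) habpos.le
    calc (b - a) / (a + b) = Real.sqrt (((b - a) / (a + b)) ^ 2) :=
          (Real.sqrt_sq h0).symm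
      _ ≤ x := Real.sqrt_le_sqrt hkey
  rw [div_le_iff₀ habpos] at hmain
  rw [div_le_div_iff₀ hapos (by linarith : (0 : ℝ) < 1 - x)]
  nlinarith [hmain]
end

section
/- Let A ∈ C^{d×d} be Hermitian positive semidefinite with A ⪯ I, let û > λ_max(A), and let B be a finite set of vectors in C^d with ‖v‖² = α for all v ∈ B and ∑_{v∈B} vv* = I − A. Suppose α·λ_max((ûI−A)^{-1}) < 1. Then ∑_{v∈B} log(1 − v*(ûI−A)^{-1}v) ≥ (1/α)·tr[(I−A)·log(I − α(ûI−A)^{-1})]. -/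
open Matrix
open scoped ComplexOrder

namespace Stmt9Aux

variable {d : ℕ}

lemma quadform_eq (W : Matrix (Fin d) (Fin d) ℂ) (f : Fin d → ℝ) (x : Fin d → ℂ) :
    star x ⬝ᵥ ((W * Matrix.diagonal (fun j => (f j : ℂ)) * Wᴴ) *ᵥ x)
      = ∑ j, (f j : ℂ) * (Complex.normSq ((Wᴴ *ᵥ x) j) : ℂ) := by
  have h1 : (W * Matrix.diagonal (fun j => (f j : ℂ)) * Wᴴ) *ᵥ x
      = W *ᵥ (Matrix.diagonal (fun j => (f j : ℂ)) *ᵥ (Wᴴ *ᵥ x)) := by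
    simp [Matrix.mulVec_mulVec, Matrix.mul_assoc]
  have h2 : star x ᵥ* W = star (Wᴴ *ᵥ x) := by
    rw [Matrix.star_mulVec, Matrix.conjTranspose_conjTranspose]
  rw [h1, Matrix.dotProduct_mulVec, h2]
  simp only [dotProduct, Matrix.mulVec_diagonal, Pi.star_apply, Complex.star_def]
  refine Finset.sum_congr rfl fun j _ => ?_
  rw [← Complex.mul_conj]
  ring

lemma sum_normSq_eq (W : Matrix (Fin d) (Fin d) ℂ)
    (hW : W ∈ Matrix.unitaryGroup (Fin d) ℂ) (x : Fin d → ℂ) :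
    ∑ j, (Complex.normSq ((Wᴴ *ᵥ x) j) : ℂ) = star x ⬝ᵥ x := by
  have h2 : star x ᵥ* W = star (Wᴴ *ᵥ x) := by
    rw [Matrix.star_mulVec, Matrix.conjTranspose_conjTranspose]
  have h3 : star (Wᴴ *ᵥ x) ⬝ᵥ (Wᴴ *ᵥ x) = star x ⬝ᵥ x := by
    rw [← h2, ← Matrix.dotProduct_mulVec, Matrix.mulVec_mulVec,
      ← Matrix.star_eq_conjTranspose, (Matrix.mem_unitaryGroup_iff).mp hW, Matrix.one_mulVec]
  rw [← h3]
  simp only [dotProduct, Pi.star_apply, Complex.star_def]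
  refine Finset.sum_congr rfl fun j _ => ?_
  rw [← Complex.mul_conj]
  ring

lemma trace_vecMulVec_mul (a b : Fin d → ℂ) (X : Matrix (Fin d) (Fin d) ℂ) :
    (Matrix.vecMulVec a b * X).trace = b ⬝ᵥ (X *ᵥ a) := by
  simp only [Matrix.trace, Matrix.diag, Matrix.mul_apply, Matrix.vecMulVec_apply,
    dotProduct, Matrix.mulVec]
  rw [Finset.sum_comm]
  refine Finset.sum_congr rfl fun j _ => ?_
  simp only [dotProduct, Finset.mul_sum]
  refine Finset.sum_congr rfl fun i _ => ?_
  ring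

lemma jensen_log {n : ℕ} (w μ : Fin n → ℝ) (α : ℝ) (hα : 0 < α)
    (hw : ∀ j, 0 ≤ w j) (hμ : ∀ j, 0 < μ j) (hsum : ∑ j, w j = α) :
    (1 / α) * ∑ j, w j * Real.log (μ j) ≤ Real.log ((∑ j, w j * μ j) / α) := by
  have h := (strictConcaveOn_log_Ioi.concaveOn).le_map_sum
    (t := Finset.univ) (w := fun j => w j / α) (p := μ)
    (fun j _ => div_nonneg (hw j) hα.le)
    (by rw [← Finset.sum_div, hsum, div_self hα.ne'])
    (fun j _ => hμ j)
  simp only [smul_eq_mul] at h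
  calc (1 / α) * ∑ j, w j * Real.log (μ j)
      = ∑ j, w j / α * Real.log (μ j) := by
        rw [Finset.mul_sum]; exact Finset.sum_congr rfl fun j _ => by ring
    _ ≤ Real.log (∑ j, w j / α * μ j) := h
    _ = Real.log ((∑ j, w j * μ j) / α) := by
        rw [Finset.sum_div]; exact congrArg _ (Finset.sum_congr rfl fun j _ => by ring)

lemma pos_entries_of_posdef {K W : Matrix (Fin d) (Fin d) ℂ}
    (hW : W ∈ Matrix.unitaryGroup (Fin d) ℂ) (f : Fin d → ℝ)
    (hrep : K = W * Matrix.diagonal (fun j => (f j : ℂ)) * Wᴴ)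
    (hK : K.PosDef) (j : Fin d) : 0 < f j := by
  have h2 : Wᴴ *ᵥ (W *ᵥ Pi.single j 1) = Pi.single j 1 := by
    rw [Matrix.mulVec_mulVec, ← Matrix.star_eq_conjTranspose,
      (Matrix.mem_unitaryGroup_iff').mp hW, Matrix.one_mulVec]
  have hx : W *ᵥ Pi.single j 1 ≠ 0 := by
    intro h
    rw [h, Matrix.mulVec_zero] at h2
    have := congrFun h2 j
    simp at this
  have hpos := hK.dotProduct_mulVec_pos hx
  rw [hrep, quadform_eq, h2] at hpos
  have h4 : ∑ j', (f j' : ℂ) * (Complex.normSq ((Pi.single j 1 : Fin d → ℂ) j') : ℂ)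
      = (f j : ℂ) := by
    rw [Finset.sum_eq_single j]
    · simp
    · intro b _ hb
      simp [Pi.single_apply, hb]
    · simp
  rw [h4] at hpos
  exact Complex.zero_lt_real.mp hpos

lemma posdef_of_rep {K W : Matrix (Fin d) (Fin d) ℂ}
    (hW : W ∈ Matrix.unitaryGroup (Fin d) ℂ) (f : Fin d → ℝ)
    (hrep : K = W * Matrix.diagonal (fun j => (f j : ℂ)) * Wᴴ)
    (hherm : K.IsHermitian) (hf : ∀ j, 0 < f j) : K.PosDef := by
  refine Matrix.PosDef.of_dotProduct_mulVec_pos hherm fun x hx => ?_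
  rw [hrep, quadform_eq]
  have hcast : ∑ j, (f j : ℂ) * (Complex.normSq ((Wᴴ *ᵥ x) j) : ℂ)
      = ((∑ j, f j * Complex.normSq ((Wᴴ *ᵥ x) j) : ℝ) : ℂ) := by
    push_cast; rfl
  rw [hcast, Complex.zero_lt_real]
  have hc : Wᴴ *ᵥ x ≠ 0 := by
    intro h
    apply hx
    have h5 : W *ᵥ (Wᴴ *ᵥ x) = x := by
      rw [Matrix.mulVec_mulVec, ← Matrix.star_eq_conjTranspose,
        (Matrix.mem_unitaryGroup_iff).mp hW, Matrix.one_mulVec]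
    rw [h, Matrix.mulVec_zero] at h5
    exact h5.symm
  obtain ⟨j, hj⟩ := Function.ne_iff.mp hc
  exact Finset.sum_pos'
    (fun i _ => mul_nonneg (hf i).le (Complex.normSq_nonneg _))
    ⟨j, Finset.mem_univ j, mul_pos (hf j) (Complex.normSq_pos.mpr hj)⟩

end Stmt9Aux

open Stmt9Aux

/-- The matrix logarithm of a Hermitian matrix, defined via its spectral
decomposition: `log A = U · diag(log λ_i) · U*`. -/
noncomputable def matLog {d : ℕ} (A : Matrix (Fin d) (Fin d) ℂ)
    (hA : A.IsHermitian) : Matrix (Fin d) (Fin d) ℂ :=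
  (hA.eigenvectorUnitary : Matrix (Fin d) (Fin d) ℂ) *
    Matrix.diagonal (fun i => (Real.log (hA.eigenvalues i) : ℂ)) *
      (star hA.eigenvectorUnitary : Matrix (Fin d) (Fin d) ℂ)

/-- Let `A` be Hermitian PSD with `A ⪯ I` and `λ_max(A) < û`, and let
`v 1, …, v k` be vectors with `‖v i‖² = α` and `∑ i, v i (v i)ᴴ = I − A`.
If `α · λ_max((ûI−A)^{-1}) < 1` (i.e. `α < û − λ_max(A)`), then
`∑ i, log(1 − (v i)ᴴ(ûI−A)^{-1}(v i)) ≥ (1/α)·tr[(I−A)·log(I − α(ûI−A)^{-1})]`. -/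
theorem stmt9 {d k : ℕ} (A : Matrix (Fin d) (Fin d) ℂ) (uhat α : ℝ)
    (hA : A.PosSemidef)
    (hAle : ((1 : Matrix (Fin d) (Fin d) ℂ) - A).PosSemidef)
    (huhat : ((uhat : ℂ) • (1 : Matrix (Fin d) (Fin d) ℂ) - A).PosDef)
    (hα : 0 < α)
    (hαlt : (((uhat - α : ℝ) : ℂ) • (1 : Matrix (Fin d) (Fin d) ℂ) - A).PosDef)
    (v : Fin k → (Fin d → ℂ))
    (hnorm : ∀ i, star (v i) ⬝ᵥ v i = (α : ℂ))
    (hsum : ∑ i, vecMulVec (v i) (star (v i)) = (1 : Matrix (Fin d) (Fin d) ℂ) - A)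
    (hM : ((1 : Matrix (Fin d) (Fin d) ℂ) -
      (α : ℂ) • ((uhat : ℂ) • (1 : Matrix (Fin d) (Fin d) ℂ) - A)⁻¹).IsHermitian) :
    ∑ i, Real.log (1 - (star (v i) ⬝ᵥ ((uhat : ℂ) • (1 : Matrix (Fin d) (Fin d) ℂ) - A)⁻¹ *ᵥ v i).re) ≥
      (1 / α) * (((1 : Matrix (Fin d) (Fin d) ℂ) - A) * matLog _ hM).trace.re := by
  classical
  have hAH : A.IsHermitian := hA.1
  set M : Matrix (Fin d) (Fin d) ℂ := (uhat : ℂ) • (1 : Matrix (Fin d) (Fin d) ℂ) - A with hMdef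
  set HH : Matrix (Fin d) (Fin d) ℂ := (1 : Matrix (Fin d) (Fin d) ℂ) - (α : ℂ) • M⁻¹
    with hHHdef
  set V : Matrix (Fin d) (Fin d) ℂ := (hAH.eigenvectorUnitary : Matrix (Fin d) (Fin d) ℂ)
    with hVdef
  set a : Fin d → ℝ := hAH.eigenvalues with hadef
  have hVmem : V ∈ Matrix.unitaryGroup (Fin d) ℂ := hAH.eigenvectorUnitary.2
  have fact1 : V * Vᴴ = 1 := by
    rw [← Matrix.star_eq_conjTranspose]
    exact (Matrix.mem_unitaryGroup_iff).mp hVmem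
  have fact2 : Vᴴ * V = 1 := by
    rw [← Matrix.star_eq_conjTranspose]
    exact (Matrix.mem_unitaryGroup_iff').mp hVmem
  have hArep : A = V * Matrix.diagonal (fun j => (a j : ℂ)) * Vᴴ := by
    exact hAH.spectral_theorem
  have hmulrep : ∀ f g : Fin d → ℂ,
      (V * Matrix.diagonal f * Vᴴ) * (V * Matrix.diagonal g * Vᴴ)
        = V * Matrix.diagonal (fun j => f j * g j) * Vᴴ := by
    intro f g
    simp only [Matrix.mul_assoc]
    rw [← Matrix.mul_assoc Vᴴ V, fact2, Matrix.one_mul,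
      ← Matrix.mul_assoc (Matrix.diagonal f), Matrix.diagonal_mul_diagonal]
  have hrep : ∀ c : ℝ, (c : ℂ) • (1 : Matrix (Fin d) (Fin d) ℂ) - A
      = V * Matrix.diagonal (fun j => ((c - a j : ℝ) : ℂ)) * Vᴴ := by
    intro c
    have h1 : V * Matrix.diagonal (fun _ : Fin d => (c : ℂ)) * Vᴴ
        = (c : ℂ) • (1 : Matrix (Fin d) (Fin d) ℂ) := by
      rw [← Matrix.smul_one_eq_diagonal, Matrix.mul_smul, Matrix.mul_one,
        Matrix.smul_mul, fact1]
    conv_lhs => rw [← h1, hArep]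
    rw [← Matrix.sub_mul, ← Matrix.mul_sub, Matrix.diagonal_sub]
    congr 2
    funext j
    push_cast
    ring
  have hgap : ∀ j, 0 < uhat - α - a j := by
    intro j
    exact pos_entries_of_posdef hVmem (fun j => uhat - α - a j)
      (by rw [hrep (uhat - α)]) hαlt j
  have hMa : ∀ j, 0 < uhat - a j := fun j => by have := hgap j; linarith
  have hMrep : M = V * Matrix.diagonal (fun j => ((uhat - a j : ℝ) : ℂ)) * Vᴴ := hrep uhat
  have hMinv : M⁻¹ = V * Matrix.diagonal (fun j => (((uhat - a j)⁻¹ : ℝ) : ℂ)) * Vᴴ := by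
    apply Matrix.inv_eq_right_inv
    rw [hMrep, hmulrep]
    have h1 : (fun j => ((uhat - a j : ℝ) : ℂ) * (((uhat - a j)⁻¹ : ℝ) : ℂ))
        = fun _ : Fin d => (1 : ℂ) := by
      funext j
      rw [← Complex.ofReal_mul, mul_inv_cancel₀ (hMa j).ne']
      norm_num
    rw [h1, Matrix.diagonal_one, Matrix.mul_one, fact1]
  have hHrep : HH = V * Matrix.diagonal
      (fun j => ((1 - α * (uhat - a j)⁻¹ : ℝ) : ℂ)) * Vᴴ := by
    rw [hHHdef, hMinv]
    have h1 : V * Matrix.diagonal (fun _ : Fin d => (1 : ℂ)) * Vᴴ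
        = (1 : Matrix (Fin d) (Fin d) ℂ) := by
      rw [Matrix.diagonal_one, Matrix.mul_one, fact1]
    have h2 : (α : ℂ) • (V * Matrix.diagonal (fun j => (((uhat - a j)⁻¹ : ℝ) : ℂ)) * Vᴴ)
        = V * Matrix.diagonal (fun j => ((α * (uhat - a j)⁻¹ : ℝ) : ℂ)) * Vᴴ := by
      rw [← smul_mul_assoc, ← mul_smul_comm, ← Matrix.diagonal_smul]
      congr 2
      refine congrArg _ ?_
      funext j
      simp only [Pi.smul_apply, smul_eq_mul]
      push_cast
      ring
    rw [← h1, h2, ← Matrix.sub_mul, ← Matrix.mul_sub, Matrix.diagonal_sub]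
    congr 2
    funext j
    push_cast
    ring
  have hHpd : HH.PosDef := by
    refine posdef_of_rep hVmem (fun j => 1 - α * (uhat - a j)⁻¹) hHrep hM ?_
    intro j
    have h1 := hMa j
    have h2 : α < uhat - a j := by have := hgap j; linarith
    have h3 : α * (uhat - a j)⁻¹ < 1 := by
      rw [← div_eq_mul_inv, div_lt_one h1]; exact h2
    linarith
  have hμpos : ∀ j, 0 < hM.eigenvalues j := fun j => hHpd.eigenvalues_pos j
  set U : Matrix (Fin d) (Fin d) ℂ := (hM.eigenvectorUnitary : Matrix (Fin d) (Fin d) ℂ)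
    with hUdef
  set μ : Fin d → ℝ := hM.eigenvalues with hμdef
  have hUmem : U ∈ Matrix.unitaryGroup (Fin d) ℂ := hM.eigenvectorUnitary.2
  have hHspec : HH = U * Matrix.diagonal (fun j => (μ j : ℂ)) * Uᴴ := by
    exact hM.spectral_theorem
  have hlogrep : matLog HH hM = U * Matrix.diagonal (fun j => ((Real.log (μ j) : ℝ) : ℂ)) * Uᴴ := by
    simp only [matLog, Unitary.coe_star, Matrix.star_eq_conjTranspose]
    rfl
  set w : Fin k → Fin d → ℝ := fun i j => Complex.normSq ((Uᴴ *ᵥ v i) j) with hwdef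
  have hwsum : ∀ i, ∑ j, w i j = α := by
    intro i
    have h1 := sum_normSq_eq U hUmem (v i)
    rw [hnorm i] at h1
    exact_mod_cast h1
  have hHquad : ∀ i, star (v i) ⬝ᵥ (HH *ᵥ v i) = ((∑ j, w i j * μ j : ℝ) : ℂ) := by
    intro i
    calc star (v i) ⬝ᵥ (HH *ᵥ v i)
        = ∑ j, (μ j : ℂ) * ((w i j : ℝ) : ℂ) := by rw [hHspec]; exact quadform_eq U μ (v i)
      _ = ((∑ j, w i j * μ j : ℝ) : ℂ) := by
          push_cast
          exact Finset.sum_congr rfl fun j _ => by ring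
  have hlogquad : ∀ i, star (v i) ⬝ᵥ (matLog HH hM *ᵥ v i)
      = ((∑ j, w i j * Real.log (μ j) : ℝ) : ℂ) := by
    intro i
    calc star (v i) ⬝ᵥ (matLog HH hM *ᵥ v i)
        = ∑ j, ((Real.log (μ j) : ℝ) : ℂ) * ((w i j : ℝ) : ℂ) := by
          rw [hlogrep]; exact quadform_eq U (fun j => Real.log (μ j)) (v i)
      _ = _ := by
          push_cast
          exact Finset.sum_congr rfl fun j _ => by ring
  have hMinv2 : M⁻¹ = (α : ℂ)⁻¹ • ((1 : Matrix (Fin d) (Fin d) ℂ) - HH) := by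
    rw [hHHdef, sub_sub_cancel, smul_smul,
      inv_mul_cancel₀ (Complex.ofReal_ne_zero.mpr hα.ne'), one_smul]
  have hq : ∀ i, 1 - (star (v i) ⬝ᵥ M⁻¹ *ᵥ v i).re = (∑ j, w i j * μ j) / α := by
    intro i
    have h1 : star (v i) ⬝ᵥ M⁻¹ *ᵥ v i
        = (α : ℂ)⁻¹ * ((α : ℂ) - ((∑ j, w i j * μ j : ℝ) : ℂ)) := by
      rw [hMinv2, Matrix.smul_mulVec, dotProduct_smul, Matrix.sub_mulVec,
        Matrix.one_mulVec, dotProduct_sub, hnorm i, hHquad i, smul_eq_mul]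
    rw [h1]
    have h2 : ((α : ℂ)⁻¹ * ((α : ℂ) - ((∑ j, w i j * μ j : ℝ) : ℂ)))
        = (((α⁻¹ * (α - ∑ j, w i j * μ j)) : ℝ) : ℂ) := by push_cast; ring
    rw [h2, Complex.ofReal_re]
    field_simp
    ring
  have htrre : ((((1 : Matrix (Fin d) (Fin d) ℂ) - A) * matLog HH hM).trace).re
      = ∑ i, ∑ j, w i j * Real.log (μ j) := by
    have htr : (((1 : Matrix (Fin d) (Fin d) ℂ) - A) * matLog HH hM).trace
        = ∑ i, star (v i) ⬝ᵥ (matLog HH hM *ᵥ v i) := by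
      rw [← hsum, Finset.sum_mul, Matrix.trace_sum]
      exact Finset.sum_congr rfl fun i _ => trace_vecMulVec_mul _ _ _
    rw [htr, Complex.re_sum]
    exact Finset.sum_congr rfl fun i _ => by rw [hlogquad i, Complex.ofReal_re]
  rw [ge_iff_le, htrre, Finset.mul_sum]
  refine Finset.sum_le_sum fun i _ => ?_
  rw [hq i]
  exact jensen_log (w i) μ α hα (fun j => Complex.normSq_nonneg _) hμpos (hwsum i)
end

section
/- Let d, m be positive integers with d < m/2. Then ∑_{i=0}^{m/2−1} log(1 − d/(m−i)) ≥ −d·log 2 − 2d²/m, where m is even. -/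
open Real intervalIntegral

/-- For an even positive integer `m` and a positive integer `d` with `2d < m`,
`∑_{i=0}^{m/2−1} log(1 − d/(m−i)) ≥ −d·log 2 − 2d²/m`. -/
theorem stmt12 (d m : ℕ) (hd : 0 < d) (hm : Even m) (hdm : 2 * d < m) :
    ∑ i ∈ Finset.range (m / 2), Real.log (1 - (d : ℝ) / ((m : ℝ) - (i : ℝ))) ≥
      -(d : ℝ) * Real.log 2 - 2 * (d : ℝ) ^ 2 / (m : ℝ) := by
  obtain ⟨n, hn⟩ := hm
  have hmn : m = 2 * n := by omega
  have hm2 : m / 2 = n := by omega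
  have hdn : d < n := by omega
  set D : ℝ := (d : ℝ) with hD
  set N : ℝ := (n : ℝ) with hN
  have haN : (m : ℝ) = 2 * N := by rw [hmn]; push_cast; ring
  have hDpos : 0 < D := by rw [hD]; exact_mod_cast hd
  have hDN : D < N := by rw [hD, hN]; exact_mod_cast hdn
  have hNpos : 0 < N := lt_trans hDpos hDN
  have hND : 0 < N - D := by linarith
  set f : ℝ → ℝ := fun x => Real.log (1 - D / ((m : ℝ) - x)) with hf
  -- antitone on [0, n]
  have harg : ∀ x ∈ Set.Icc (0:ℝ) ((0:ℝ) + n), 0 < (m:ℝ) - x ∧ N - D ≤ (m:ℝ) - D - x := by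
    intro x hx
    obtain ⟨hx0, hx1⟩ := hx
    rw [zero_add] at hx1
    constructor <;> [nlinarith [haN]; nlinarith [haN]]
  have hanti : AntitoneOn f (Set.Icc (0:ℝ) ((0:ℝ) + n)) := by
    intro x hx y hy hxy
    have hxp := harg x hx
    have hyp := harg y hy
    have h1 : 0 < 1 - D / ((m:ℝ) - y) := by
      rw [sub_pos, div_lt_one hyp.1]; nlinarith [hyp.2]
    apply Real.log_le_log h1
    have : D / ((m:ℝ) - y) ≥ D / ((m:ℝ) - x) := by
      apply div_le_div_of_nonneg_left hDpos.le hyp.1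
      linarith
    linarith
  have key := hanti.integral_le_sum
  rw [zero_add] at key
  simp only [zero_add] at key
  rw [hm2]
  refine le_trans ?_ key
  -- compute the integral
  have hcong : ∀ x ∈ Set.uIcc (0:ℝ) (n:ℝ), f x = Real.log ((m:ℝ) - D - x) - Real.log ((m:ℝ) - x) := by
    intro x hx
    rw [Set.uIcc_of_le (by positivity)] at hx
    have hxp : 0 < (m:ℝ) - x ∧ N - D ≤ (m:ℝ) - D - x := by
      apply harg; rwa [zero_add]
    have h2 : 0 < (m:ℝ) - D - x := lt_of_lt_of_le hND hxp.2
    have : 1 - D / ((m:ℝ) - x) = ((m:ℝ) - D - x) / ((m:ℝ) - x) := by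
      rw [eq_div_iff (ne_of_gt hxp.1), sub_mul, one_mul, div_mul_cancel₀ _ (ne_of_gt hxp.1)]
      ring
    simp only [hf]
    rw [this, Real.log_div (ne_of_gt h2) (ne_of_gt hxp.1)]
  have hI : (∫ x in (0:ℝ)..(n:ℝ), f x)
      = (∫ x in (0:ℝ)..(n:ℝ), Real.log ((m:ℝ) - D - x)) - ∫ x in (0:ℝ)..(n:ℝ), Real.log ((m:ℝ) - x) := by
    rw [intervalIntegral.integral_congr hcong]
    apply intervalIntegral.integral_sub
    · apply ContinuousOn.intervalIntegrable
      apply ContinuousOn.log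
      · exact (continuousOn_const.sub continuousOn_id)
      · intro x hx
        rw [Set.uIcc_of_le (by positivity)] at hx
        have := (harg x (by simpa [zero_add] using hx)).2
        have h2 : (0:ℝ) < (m:ℝ) - D - x := lt_of_lt_of_le hND this
        intro h; rw [h] at h2; linarith
    · apply ContinuousOn.intervalIntegrable
      apply ContinuousOn.log
      · exact (continuousOn_const.sub continuousOn_id)
      · intro x hx
        rw [Set.uIcc_of_le (by positivity)] at hx
        have h2 := (harg x (by simpa [zero_add] using hx)).1
        intro h; rw [h] at h2; linarith
  have hI1 : (∫ x in (0:ℝ)..(n:ℝ), Real.log ((m:ℝ) - D - x))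
      = (m - D) * Real.log (m - D) - (N - D) * Real.log (N - D) - (m - D) + (N - D) := by
    have : (∫ x in (0:ℝ)..(n:ℝ), Real.log ((m:ℝ) - D - x))
        = ∫ x in ((m:ℝ) - D - N)..((m:ℝ) - D - 0), Real.log x := by
      rw [← intervalIntegral.integral_comp_sub_left (fun x => Real.log x) ((m:ℝ) - D)]
    rw [this]
    rw [show (m:ℝ) - D - N = N - D by rw [haN]; ring, sub_zero,
      integral_log]
  have hI2 : (∫ x in (0:ℝ)..(n:ℝ), Real.log ((m:ℝ) - x))
      = (m:ℝ) * Real.log m - N * Real.log N - (m:ℝ) + N := by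
    have : (∫ x in (0:ℝ)..(n:ℝ), Real.log ((m:ℝ) - x))
        = ∫ x in ((m:ℝ) - N)..((m:ℝ) - 0), Real.log x := by
      rw [← intervalIntegral.integral_comp_sub_left (fun x => Real.log x) ((m:ℝ))]
    rw [this, show (m:ℝ) - N = N by rw [haN]; ring, sub_zero,
      integral_log]
  rw [hI, hI1, hI2]
  -- now the closed-form inequality
  have hmpos : (0:ℝ) < (m:ℝ) := by rw [haN]; linarith
  have hmD : 0 < (m:ℝ) - D := by rw [haN]; linarith
  have hlogm : Real.log (m:ℝ) = Real.log 2 + Real.log N := by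
    rw [haN, Real.log_mul (by norm_num) (ne_of_gt hNpos)]
  -- P := log(m - D) - log m ≥ -D/(m-D) gives (m-D) * P ≥ -D
  have hP : (m - D) * (Real.log ((m:ℝ) - D) - Real.log (m:ℝ)) ≥ -D := by
    have h1 : Real.log (m:ℝ) - Real.log ((m:ℝ) - D) ≤ (m:ℝ) / ((m:ℝ) - D) - 1 := by
      rw [← Real.log_div (ne_of_gt hmpos) (ne_of_gt hmD)]
      exact Real.log_le_sub_one_of_pos (by positivity)
    have h2 : (m:ℝ) / ((m:ℝ) - D) - 1 = D / ((m:ℝ) - D) := by field_simp; ring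
    rw [h2] at h1
    have := mul_le_mul_of_nonneg_left h1 hmD.le
    rw [mul_div_cancel₀ _ (ne_of_gt hmD)] at this
    nlinarith
  -- Q := log(N - D) - log N ≤ -D/N gives -(N-D) * Q ≥ (N-D) * D / N
  have hQ : (N - D) * (Real.log (N - D) - Real.log N) ≤ (N - D) * (-(D / N)) := by
    have h1 : Real.log (N - D) - Real.log N ≤ (N - D) / N - 1 := by
      rw [← Real.log_div (ne_of_gt hND) (ne_of_gt hNpos)]
      exact Real.log_le_sub_one_of_pos (by positivity)
    have h2 : (N - D) / N - 1 = -(D / N) := by field_simp; ring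
    rw [h2] at h1
    exact mul_le_mul_of_nonneg_left h1 hND.le
  have hDN' : (N - D) * (-(D / N)) = -D + D^2 / N := by field_simp; ring
  have h2DN : 2 * D ^ 2 / (m:ℝ) = D ^ 2 / N := by rw [haN]; field_simp
  have expand : ((m:ℝ) - D) * Real.log ((m:ℝ) - D) - (N - D) * Real.log (N - D) - ((m:ℝ) - D) + (N - D)
      - ((m:ℝ) * Real.log (m:ℝ) - N * Real.log N - (m:ℝ) + N)
      = -D * Real.log 2 + ((m:ℝ) - D) * (Real.log ((m:ℝ) - D) - Real.log (m:ℝ))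
        - (N - D) * (Real.log (N - D) - Real.log N) := by
    rw [hlogm, haN]; ring
  rw [expand, h2DN]
  linarith [hP, hQ, hDN']
end

section
/- Let B ∈ C^{d×d} be Hermitian positive definite with tr(B) = d/2 and (d/tr(B))^d·det(B) ≥ 24/25. Then λ_max(B) ≤ 3/4 and λ_min(B) ≥ 1/3. -/
open Matrix
open scoped ComplexOrder

/-- Key scalar lemma: if positive reals summing to `d` have product at least `24/25`,
then each of them lies in `[2/3, 3/2]`. -/
lemma stmt15_aux {d : ℕ} (hd : 0 < d) (lam : Fin d → ℝ) (hpos : ∀ i, 0 < lam i)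
    (hsum : ∑ i, lam i = d) (hprod : (24 : ℝ) / 25 ≤ ∏ i, lam i) (j : Fin d) :
    2 / 3 ≤ lam j ∧ lam j ≤ 3 / 2 := by
  set c : ℝ := lam j with hc_def
  have hc : 0 < c := hpos j
  -- First establish `24/25 ≤ c * exp (1 - c)`.
  have hce : (24 : ℝ) / 25 ≤ c * Real.exp (1 - c) := by
    rcases eq_or_lt_of_le (show 1 ≤ d by omega) with h1 | h2
    · -- d = 1 : the erased product is empty and c = 1
      have hall : ∀ i : Fin d, i = j := fun i => Fin.ext (by omega)
      have h1' : c = 1 := by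
        have : ∑ i, lam i = c := by
          rw [show (Finset.univ : Finset (Fin d)) = {j} by
            ext i; simp [hall i]]
          simp [hc_def]
        rw [this] at hsum
        rw [hsum]
        exact_mod_cast congrArg (Nat.cast : ℕ → ℝ) h1.symm
      rw [h1']
      simp [Real.exp_zero]
      norm_num
    · -- d ≥ 2
      set n : ℕ := d - 1 with hn_def
      have hn : 0 < n := by omega
      have hn0 : (n : ℝ) ≠ 0 := Nat.cast_ne_zero.2 hn.ne'
      have hdn : (d : ℝ) = (n : ℝ) + 1 := by
        have : d = n + 1 := by omega
        exact_mod_cast congrArg (Nat.cast : ℕ → ℝ) this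
      set s : Finset (Fin d) := Finset.univ.erase j with hs_def
      have hcard : s.card = n := by
        rw [hs_def, Finset.card_erase_of_mem (Finset.mem_univ j), Finset.card_univ,
          Fintype.card_fin]
      have hsum' : ∑ i ∈ s, lam i = (d : ℝ) - c := by
        have h := Finset.add_sum_erase Finset.univ lam (Finset.mem_univ j)
        rw [hsum] at h
        linarith [h]
      have hsnn : (0 : ℝ) ≤ ∑ i ∈ s, lam i :=
        Finset.sum_nonneg fun i _ => (hpos i).le
      have hTnn : (0 : ℝ) ≤ ((d : ℝ) - c) / n := by
        apply div_nonneg _ (Nat.cast_nonneg n)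
        rw [← hsum']; exact hsnn
      -- AM-GM on the erased product
      have hAM := Real.geom_mean_le_arith_mean_weighted s (fun _ => 1 / (n : ℝ)) lam
        (fun i _ => by positivity) (by rw [Finset.sum_const, hcard, nsmul_eq_mul]; field_simp)
        (fun i _ => (hpos i).le)
      have hPpos : 0 < ∏ i ∈ s, lam i := Finset.prod_pos fun i _ => hpos i
      have hlhs : (∏ i ∈ s, lam i ^ ((1 : ℝ) / n)) = (∏ i ∈ s, lam i) ^ ((1 : ℝ) / n) :=
        Real.finset_prod_rpow s lam (fun i _ => (hpos i).le) _
      have hrhs : ∑ i ∈ s, (1 / (n : ℝ)) * lam i = ((d : ℝ) - c) / n := by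
        rw [← Finset.mul_sum, hsum']; ring
      rw [hlhs, hrhs] at hAM
      have hpow : (∏ i ∈ s, lam i) ≤ (((d : ℝ) - c) / n) ^ n := by
        have h := pow_le_pow_left₀ (Real.rpow_nonneg hPpos.le _) hAM n
        rwa [show ((1 : ℝ) / n) = ((n : ℝ))⁻¹ by field_simp,
          Real.rpow_inv_natCast_pow hPpos.le hn.ne'] at h
      have hexp : (((d : ℝ) - c) / n) ^ n ≤ Real.exp (1 - c) := by
        have h3 : ((d : ℝ) - c) / n ≤ Real.exp ((1 - c) / n) := by
          have h4 := Real.add_one_le_exp ((1 - c) / n)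
          have h5 : ((d : ℝ) - c) / n = (1 - c) / n + 1 := by
            rw [hdn]; field_simp; ring
          linarith [h4, h5.ge, h5.le]
        calc (((d : ℝ) - c) / n) ^ n ≤ (Real.exp ((1 - c) / n)) ^ n :=
              pow_le_pow_left₀ hTnn h3 n
          _ = Real.exp ((n : ℝ) * ((1 - c) / n)) := (Real.exp_nat_mul _ n).symm
          _ = Real.exp (1 - c) := by rw [mul_div_cancel₀ _ hn0]
      have hsplit : (∏ i, lam i) = c * ∏ i ∈ s, lam i :=
        (Finset.mul_prod_erase Finset.univ lam (Finset.mem_univ j)).symm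
      calc (24 : ℝ) / 25 ≤ ∏ i, lam i := hprod
        _ = c * ∏ i ∈ s, lam i := hsplit
        _ ≤ c * Real.exp (1 - c) := by
            apply mul_le_mul_of_nonneg_left _ hc.le
            exact hpow.trans hexp
  -- Convert to `24/25 * exp (c - 1) ≤ c`.
  have h0 : Real.exp (1 - c) * Real.exp (c - 1) = 1 := by
    rw [← Real.exp_add]; norm_num
  have hkey : (24 : ℝ) / 25 * Real.exp (c - 1) ≤ c := by
    have h2 := mul_le_mul_of_nonneg_right hce (Real.exp_pos (c - 1)).le
    rwa [mul_assoc, h0, mul_one] at h2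
  constructor
  · -- lower bound 2/3 ≤ c
    by_contra hlt
    push_neg at hlt
    have hx : |c - 1| ≤ 1 := by rw [abs_le]; constructor <;> linarith
    have hb := Real.exp_bound hx (by norm_num : 0 < 3)
    have hsum3 : ∑ m ∈ Finset.range 3, (c - 1) ^ m / m.factorial
        = 1 + (c - 1) + (c - 1) ^ 2 / 2 := by
      simp [Finset.sum_range_succ, Nat.factorial]
    rw [hsum3] at hb
    have habs : |c - 1| = 1 - c := by rw [abs_of_nonpos (by linarith)]; ring
    rw [habs] at hb
    rw [abs_le] at hb
    have hlow : Real.exp (c - 1)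
        ≥ 1 + (c - 1) + (c - 1) ^ 2 / 2 - (1 - c) ^ 3 * (2 / 9) := by
      have h5 := hb.1
      norm_num [Nat.factorial] at h5
      linarith
    nlinarith [hkey, hlow, hc, hlt, mul_pos hc hc, mul_pos (mul_pos hc hc) hc,
      sq_nonneg (1 - c), sq_nonneg c, mul_nonneg (mul_nonneg hc.le hc.le) hc.le]
  · -- upper bound c ≤ 3/2
    by_contra hgt
    push_neg at hgt
    have he1 : Real.exp (c - 1) = Real.exp (1 / 2) * Real.exp (c - 3 / 2) := by
      rw [← Real.exp_add]; ring_nf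
    have h2 : c - 1 / 2 ≤ Real.exp (c - 3 / 2) := by
      have := Real.add_one_le_exp (c - 3 / 2)
      linarith
    have h3 : (1.5625 : ℝ) < Real.exp (1 / 2) := by
      have h4 : Real.exp (1 / 2) ^ 2 = Real.exp 1 := by
        rw [← Real.exp_nat_mul]; norm_num
      nlinarith [Real.exp_one_gt_d9, Real.exp_pos (1 / 2 : ℝ)]
    rw [he1] at hkey
    nlinarith [hkey, h2, h3, Real.exp_pos (c - 3 / 2), hgt]

/-- Let `B ∈ ℂ^{d×d}` be Hermitian positive definite with `tr(B) = d/2` and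
`(d/tr B)^d · det B ≥ 24/25`.  Then `λ_max(B) ≤ 3/4` and `λ_min(B) ≥ 1/3`. -/
theorem stmt15 {d : ℕ} (hd : 0 < d) (B : Matrix (Fin d) (Fin d) ℂ)
    (hB : B.PosDef)
    (htr : B.trace = (((d : ℝ) / 2 : ℝ) : ℂ))
    (hdet : ((d : ℝ) / B.trace.re) ^ d * B.det.re ≥ 24 / 25) :
    (⨆ i, hB.1.eigenvalues i) ≤ 3 / 4 ∧ (⨅ i, hB.1.eigenvalues i) ≥ 1 / 3 := by
  have hne : Nonempty (Fin d) := ⟨⟨0, hd⟩⟩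
  set μ : Fin d → ℝ := hB.1.eigenvalues with hμ
  have hμpos : ∀ i, 0 < μ i := fun i => hB.eigenvalues_pos i
  -- trace equals sum of eigenvalues
  have htrace : B.trace = ∑ i, (μ i : ℂ) := by
    exact hB.1.trace_eq_sum_eigenvalues
  have htrre : (∑ i, μ i) = (d : ℝ) / 2 := by
    have h := congrArg Complex.re (htrace.symm.trans htr)
    rw [← Complex.ofReal_sum] at h
    simpa using h
  -- determinant equals product of eigenvalues
  have hdetre : B.det.re = ∏ i, μ i := by
    rw [hB.1.det_eq_prod_eigenvalues, ← RCLike.ofReal_prod]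
    exact Complex.ofReal_re _
  -- rewrite the determinant hypothesis
  have htrre' : B.trace.re = (d : ℝ) / 2 := by rw [htr]; simp
  have hd0 : (0 : ℝ) < (d : ℝ) := by exact_mod_cast hd
  have hratio : (d : ℝ) / B.trace.re = 2 := by
    rw [htrre']; field_simp
  rw [hratio, hdetre] at hdet
  -- apply the key lemma to `lam i = 2 * μ i`
  have hkey : ∀ j, 2 / 3 ≤ 2 * μ j ∧ 2 * μ j ≤ 3 / 2 := by
    intro j
    apply stmt15_aux hd (fun i => 2 * μ i) (fun i => mul_pos two_pos (hμpos i))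
    · rw [← Finset.mul_sum, htrre]; field_simp
    · calc (24 : ℝ) / 25 ≤ 2 ^ d * ∏ i, μ i := hdet
        _ = ∏ i, 2 * μ i := by
            rw [Finset.prod_mul_distrib, Finset.prod_const, Finset.card_univ,
              Fintype.card_fin]
  constructor
  · exact ciSup_le fun i => by linarith [(hkey i).2]
  · exact le_ciInf fun i => by linarith [(hkey i).1]
end

section
/- Let v_1,...,v_m ∈ C^d with m even, ∑ v_i v_i* = I, and ‖v_i‖² = α = d/m for all i, where m ≥ 49d². Then there exists a partition S_1, S_2 of [m] with |S_1| = |S_2| = m/2 such that for every unit vector u ∈ C^d and j ∈ {1,2}, ∑_{i∈S_j} |⟨u, v_i⟩|² ≤ 3/4. -/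
open Matrix

open scoped InnerProductSpace ComplexConjugate

noncomputable def emb16 {d : ℕ} (x : Fin d → ℂ) : EuclideanSpace ℂ (Fin d × Fin d) :=
  (WithLp.equiv 2 _).symm (fun pq => x pq.1 * conj (x pq.2))

lemma inner_emb16 {d : ℕ} (u x : Fin d → ℂ) :
    ⟪emb16 u, emb16 x⟫_ℂ = (star u ⬝ᵥ x) * conj (star u ⬝ᵥ x) := by
  rw [PiLp.inner_apply]
  simp only [emb16, WithLp.equiv_symm_apply, WithLp.ofLp_toLp, RCLike.inner_apply, dotProduct,
    Pi.star_apply, RCLike.star_def, _root_.map_mul, Complex.conj_conj, map_sum]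
  rw [Finset.sum_mul_sum, Fintype.sum_prod_type]
  exact Finset.sum_congr rfl fun p _ => Finset.sum_congr rfl fun q _ => by ring

lemma re_inner_emb16 {d : ℕ} (u x : Fin d → ℂ) :
    RCLike.re ⟪emb16 u, emb16 x⟫_ℂ = ‖star u ⬝ᵥ x‖ ^ 2 := by
  rw [inner_emb16, Complex.mul_conj]
  simp only [Complex.normSq_eq_norm_sq, RCLike.re_to_complex]
  norm_cast

lemma norm_emb16_sq {d : ℕ} (x : Fin d → ℂ) :
    ‖emb16 x‖ ^ 2 = (∑ p, ‖x p‖ ^ 2) ^ 2 := by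
  have h : ‖emb16 x‖ ^ 2 = ∑ pq : Fin d × Fin d, ‖x pq.1 * conj (x pq.2)‖ ^ 2 := by
    rw [EuclideanSpace.norm_eq, Real.sq_sqrt (by positivity)]
    rfl
  rw [h, Fintype.sum_prod_type, sq, Finset.sum_mul_sum]
  simp [norm_mul, mul_pow]

lemma sign_lemma16 {E : Type*} [NormedAddCommGroup E] [InnerProductSpace ℂ E] :
    ∀ (n : ℕ) (D : Fin n → E), ∃ ε : Fin n → ℂ, (∀ k, ε k = 1 ∨ ε k = -1) ∧
      ‖∑ k, ε k • D k‖ ^ 2 ≤ ∑ k, ‖D k‖ ^ 2 := by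
  intro n
  induction n with
  | zero => intro D; exact ⟨fun k => 1, fun k => (k.elim0), by simp⟩
  | succ n ih =>
    intro D
    obtain ⟨ε, hε, hb⟩ := ih (fun k => D k.castSucc)
    set P : E := ∑ k : Fin n, ε k • D k.castSucc with hP
    obtain ⟨σ, hσ1, hσn, hσ2⟩ : ∃ σ : ℂ, (σ = 1 ∨ σ = -1) ∧ ‖σ‖ = 1 ∧
        RCLike.re (σ * ⟪P, D (Fin.last n)⟫_ℂ) ≤ 0 := by
      rcases le_or_gt (RCLike.re ⟪P, D (Fin.last n)⟫_ℂ) 0 with h | h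
      · exact ⟨1, Or.inl rfl, by simp, by simpa using h⟩
      · refine ⟨-1, Or.inr rfl, by simp, ?_⟩
        simp only [neg_mul, one_mul, map_neg]
        linarith
    refine ⟨Fin.snoc ε σ, ?_, ?_⟩
    · intro k
      refine Fin.lastCases ?_ ?_ k
      · simpa using hσ1
      · intro i; simp only [Fin.snoc_castSucc]; exact hε i
    · rw [Fin.sum_univ_castSucc, Fin.sum_univ_castSucc]
      simp only [Fin.snoc_castSucc, Fin.snoc_last]
      rw [← hP, @norm_add_sq ℂ]
      rw [inner_smul_right]
      have h1 : ‖σ • D (Fin.last n)‖ = ‖D (Fin.last n)‖ := by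
        rw [norm_smul, hσn, one_mul]
      rw [h1]
      nlinarith [hb, hσ2]

/-- Weaver's `KS₂` discrepancy problem in the regime `m ≥ 49d²`: given
`v 1, …, v m ∈ ℂ^d` with `m` even, `∑ i, v i (v i)ᴴ = I` and `‖v i‖² = α = d/m`,
there is a partition `S, Sᶜ` of `[m]` with `|S| = |Sᶜ| = m/2` such that for
every unit vector `u ∈ ℂ^d` both parts satisfy `∑_{i∈part} |⟨u, v i⟩|² ≤ 3/4`. -/
theorem stmt16 {m d : ℕ} (hm : Even m) (hm49 : m ≥ 49 * d ^ 2) (hm0 : 0 < m)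
    (α : ℝ) (hα : α = (d : ℝ) / m)
    (v : Fin m → (Fin d → ℂ))
    (hnorm : ∀ i, star (v i) ⬝ᵥ v i = (α : ℂ))
    (hiso : ∑ i, vecMulVec (v i) (star (v i)) = (1 : Matrix (Fin d) (Fin d) ℂ)) :
    ∃ S : Finset (Fin m), S.card = m / 2 ∧
      ∀ u : Fin d → ℂ, ∑ j, ‖u j‖ ^ 2 = 1 →
        (∑ i ∈ S, ‖star u ⬝ᵥ v i‖ ^ 2 ≤ 3 / 4 ∧
          ∑ i ∈ Sᶜ, ‖star u ⬝ᵥ v i‖ ^ 2 ≤ 3 / 4) := by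
  classical
  have hα0 : 0 ≤ α := by rw [hα]; positivity
  set n := m / 2 with hn
  have hm2 : m = 2 * n := by obtain ⟨n0, hn0⟩ := hm; omega
  -- norms of the vectors
  have hα' : ∀ i, ∑ p, ‖v i p‖ ^ 2 = α := by
    intro i
    have h := congrArg Complex.re (hnorm i)
    rw [dotProduct] at h
    rw [Complex.re_sum] at h
    simp only [Pi.star_apply, RCLike.star_def, Complex.ofReal_re] at h
    rw [← h]
    refine Finset.sum_congr rfl fun p _ => ?_
    rw [mul_comm, Complex.mul_conj]
    simp only [Complex.normSq_eq_norm_sq]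
    norm_cast
  have hnormX : ∀ i, ‖emb16 (v i)‖ = α := by
    intro i
    have h := norm_emb16_sq (v i)
    rw [hα' i] at h
    calc ‖emb16 (v i)‖ = Real.sqrt (‖emb16 (v i)‖ ^ 2) := (Real.sqrt_sq (norm_nonneg _)).symm
    _ = Real.sqrt (α ^ 2) := by rw [h]
    _ = α := Real.sqrt_sq hα0
  -- entrywise isotropy
  have hiso' : ∀ p q : Fin d, ∑ i, v i p * conj (v i q) = if p = q then 1 else 0 := by
    intro p q
    have h := congrFun (congrFun hiso p) q
    simpa [Matrix.sum_apply, vecMulVec_apply, Matrix.one_apply, Pi.star_apply,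
      RCLike.star_def] using h
  -- pairing
  have hkm : ∀ k : Fin n, 2 * (k : ℕ) + 1 < m := fun k => by omega
  set p1 : Fin n → Fin m := fun k => ⟨2 * k, by have := hkm k; omega⟩ with hp1
  set p2 : Fin n → Fin m := fun k => ⟨2 * k + 1, hkm k⟩ with hp2
  obtain ⟨ε, hε, hεb⟩ := sign_lemma16 n (fun k => emb16 (v (p1 k)) - emb16 (v (p2 k)))
  set M : EuclideanSpace ℂ (Fin d × Fin d) :=
    ∑ k, ε k • (emb16 (v (p1 k)) - emb16 (v (p2 k))) with hM
  -- bound on M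
  have hMle : ‖M‖ ≤ 1 / 2 := by
    have hsum : ∑ k : Fin n, ‖emb16 (v (p1 k)) - emb16 (v (p2 k))‖ ^ 2 ≤ n * (2 * α) ^ 2 := by
      calc ∑ k : Fin n, ‖emb16 (v (p1 k)) - emb16 (v (p2 k))‖ ^ 2
          ≤ ∑ _k : Fin n, (2 * α) ^ 2 := by
            refine Finset.sum_le_sum fun k _ => ?_
            have h := norm_sub_le (emb16 (v (p1 k))) (emb16 (v (p2 k)))
            rw [hnormX, hnormX] at h
            nlinarith [norm_nonneg (emb16 (v (p1 k)) - emb16 (v (p2 k)))]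
      _ = n * (2 * α) ^ 2 := by rw [Finset.sum_const, Finset.card_univ, Fintype.card_fin]; ring
    have hd2 : ((d : ℝ) ^ 2) / m ≤ 1 / 49 := by
      rcases Nat.eq_zero_or_pos d with hd | hd
      · subst hd; simp
      · rw [div_le_div_iff₀ (by positivity) (by norm_num)]
        have : (49 : ℝ) * d ^ 2 ≤ m := by exact_mod_cast hm49
        nlinarith
    have hval : (n : ℝ) * (2 * α) ^ 2 ≤ 2 / 49 := by
      have hmR : (m : ℝ) = 2 * n := by exact_mod_cast hm2
      have hmpos : (0 : ℝ) < m := by exact_mod_cast hm0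
      rw [hα]
      have hnpos : (0 : ℝ) < n := by
        have : 0 < n := by omega
        exact_mod_cast this
      have : (n : ℝ) * (2 * ((d : ℝ) / m)) ^ 2 = 2 * ((d : ℝ) ^ 2 / m) := by
        rw [hmR]
        field_simp
      rw [this]; linarith
    have hM2 : ‖M‖ ^ 2 ≤ 2 / 49 := le_trans hεb (le_trans hsum hval)
    nlinarith [norm_nonneg M]
  -- the set S
  set c : Fin n → Fin m := fun k => if ε k = 1 then p1 k else p2 k with hc
  set c' : Fin n → Fin m := fun k => if ε k = 1 then p2 k else p1 k with hc'
  have hcdiv : ∀ k, ((c k : ℕ)) / 2 = k := by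
    intro k; by_cases h : ε k = 1 <;> simp [hc, h, hp1, hp2] <;> omega
  have hc'div : ∀ k, ((c' k : ℕ)) / 2 = k := by
    intro k; by_cases h : ε k = 1 <;> simp [hc', h, hp1, hp2] <;> omega
  have hcinj : Function.Injective c := by
    intro k l h
    have : ((c k : ℕ)) / 2 = ((c l : ℕ)) / 2 := by rw [h]
    rw [hcdiv, hcdiv] at this
    exact Fin.ext this
  have hc'inj : Function.Injective c' := by
    intro k l h
    have : ((c' k : ℕ)) / 2 = ((c' l : ℕ)) / 2 := by rw [h]
    rw [hc'div, hc'div] at this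
    exact Fin.ext this
  have hcc' : ∀ k l, c k ≠ c' l := by
    intro k l h
    have hkl : (k : ℕ) = (l : ℕ) := by
      have : ((c k : ℕ)) / 2 = ((c' l : ℕ)) / 2 := by rw [h]
      rwa [hcdiv, hc'div] at this
    have hkl' : k.val = l.val := hkl
    have h2 : (c k : ℕ) = (c' l : ℕ) := by rw [h]
    by_cases hek : ε k = 1
    · have hel : ε l = 1 := by
        have : l = k := Fin.ext hkl'.symm
        rw [this]; exact hek
      simp [hc, hc', hek, hel, hp1, hp2] at h2
      omega
    · have hel : ¬ (ε l = 1) := by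
        have : l = k := Fin.ext hkl'.symm
        rw [this]; exact hek
      simp [hc, hc', hek, hel, hp1, hp2] at h2
      omega
  set S : Finset (Fin m) := Finset.image c Finset.univ with hS
  have hScard : S.card = n := by
    rw [hS, Finset.card_image_of_injective _ hcinj, Finset.card_univ, Fintype.card_fin]
  have hScomp : Sᶜ = Finset.image c' Finset.univ := by
    have hsub : Finset.image c' Finset.univ ⊆ Sᶜ := by
      intro i hi
      obtain ⟨k, _, hk⟩ := Finset.mem_image.mp hi
      rw [Finset.mem_compl]
      intro hiS
      obtain ⟨l, _, hl⟩ := Finset.mem_image.mp hiS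
      exact hcc' l k (by rw [hl, hk])
    have hcard : (Finset.image c' Finset.univ).card = Sᶜ.card := by
      rw [Finset.card_image_of_injective _ hc'inj, Finset.card_univ, Fintype.card_fin,
        Finset.card_compl, hScard, Fintype.card_fin]
      omega
    exact (Finset.eq_of_subset_of_card_le hsub (le_of_eq hcard.symm)).symm
  refine ⟨S, hScard, ?_⟩
  intro u hu
  set q : Fin m → ℝ := fun i => ‖star u ⬝ᵥ v i‖ ^ 2 with hq
  -- total sum is 1
  have htot : ∑ i, q i = 1 := by
    have h1 : ∑ i, ⟪emb16 u, emb16 (v i)⟫_ℂ = ∑ p, (‖u p‖ ^ 2 : ℂ) := by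
      calc ∑ i, ⟪emb16 u, emb16 (v i)⟫_ℂ
          = ∑ i, ∑ pq : Fin d × Fin d,
              conj (u pq.1 * conj (u pq.2)) * (v i pq.1 * conj (v i pq.2)) := by
            refine Finset.sum_congr rfl fun i _ => ?_
            rw [PiLp.inner_apply]
            simp [emb16, RCLike.inner_apply, WithLp.equiv_symm_apply]
            exact Finset.sum_congr rfl fun _ _ => mul_comm _ _
      _ = ∑ pq : Fin d × Fin d,
            conj (u pq.1 * conj (u pq.2)) * ∑ i, (v i pq.1 * conj (v i pq.2)) := by
            rw [Finset.sum_comm]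
            simp [Finset.mul_sum]
      _ = ∑ pq : Fin d × Fin d,
            conj (u pq.1 * conj (u pq.2)) * (if pq.1 = pq.2 then 1 else 0) := by
            refine Finset.sum_congr rfl fun pq _ => ?_
            rw [hiso']
      _ = ∑ p : Fin d, conj (u p * conj (u p)) := by
            rw [Fintype.sum_prod_type]
            simp [Finset.sum_ite_eq]
      _ = ∑ p, (‖u p‖ ^ 2 : ℂ) := by
            refine Finset.sum_congr rfl fun p _ => ?_
            rw [_root_.map_mul, Complex.conj_conj, mul_comm, Complex.mul_conj]
            simp only [Complex.normSq_eq_norm_sq]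
            norm_cast
    have h2 : ∑ i, q i = (∑ i, ⟪emb16 u, emb16 (v i)⟫_ℂ).re := by
      rw [Complex.re_sum]
      exact Finset.sum_congr rfl fun i _ => (re_inner_emb16 u (v i)).symm
    rw [h2, h1, Complex.re_sum]
    simp only [← Complex.ofReal_pow, Complex.ofReal_re]
    exact_mod_cast hu
  -- sums over S and Sᶜ
  have hSsum : ∑ i ∈ S, q i = ∑ k, q (c k) := by
    rw [hS]; exact Finset.sum_image (fun k _ l _ h => hcinj h)
  have hS'sum : ∑ i ∈ Sᶜ, q i = ∑ k, q (c' k) := by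
    rw [hScomp]; exact Finset.sum_image (fun k _ l _ h => hc'inj h)
  -- difference equals re ⟪w, M⟫
  have hdiff : ∑ i ∈ S, q i - ∑ i ∈ Sᶜ, q i = RCLike.re ⟪emb16 u, M⟫_ℂ := by
    rw [hSsum, hS'sum, ← Finset.sum_sub_distrib, hM, inner_sum, map_sum]
    refine Finset.sum_congr rfl fun k _ => ?_
    rw [inner_smul_right, inner_sub_right]
    rcases hε k with h | h
    · simp only [hc, hc', h, eq_self_iff_true, if_true, one_mul, map_sub, re_inner_emb16, hq]
    · have h1 : ε k ≠ 1 := by rw [h]; norm_num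
      simp only [hc, hc', if_neg h1, h, neg_one_mul, map_neg, map_sub, re_inner_emb16]
      ring
  -- bound on re ⟪w, M⟫
  have hwnorm : ‖emb16 u‖ = 1 := by
    have h := norm_emb16_sq u
    rw [hu] at h
    calc ‖emb16 u‖ = Real.sqrt (‖emb16 u‖ ^ 2) := (Real.sqrt_sq (norm_nonneg _)).symm
    _ = 1 := by rw [h]; simp
  have hbound : |RCLike.re ⟪emb16 u, M⟫_ℂ| ≤ 1 / 2 := by
    have h1 : ‖⟪emb16 u, M⟫_ℂ‖ ≤ ‖emb16 u‖ * ‖M‖ := norm_inner_le_norm _ _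
    rw [hwnorm, one_mul] at h1
    have h2 : |RCLike.re ⟪emb16 u, M⟫_ℂ| ≤ ‖⟪emb16 u, M⟫_ℂ‖ := by
      simpa using Complex.abs_re_le_norm ⟪emb16 u, M⟫_ℂ
    linarith
  have hsplit : ∑ i ∈ S, q i + ∑ i ∈ Sᶜ, q i = 1 := by
    rw [Finset.sum_add_sum_compl S q] at *
    · exact htot
  rw [abs_le] at hbound
  constructor <;> [skip; skip] <;> linarith [hdiff, hsplit, hbound.1, hbound.2]
end

section
/- Let A ∈ C^{d×d} be Hermitian with eigenvalues λ_1,...,λ_d, and suppose u − λ_i ≥ c > α > 0 for all i and δ = α/d. Then (1/d)·[tr log(I + δ(uI−A)^{-1})·d + tr log(I − α((u+δ)I−A)^{-1})] ≥ log(1 − α²/c²). -/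
open Matrix
open scoped ComplexOrder

lemma trace_matLog {d : ℕ} (A : Matrix (Fin d) (Fin d) ℂ) (hA : A.IsHermitian) :
    (matLog A hA).trace = ∑ i, (Real.log (hA.eigenvalues i) : ℂ) := by
  rw [matLog, Matrix.trace_mul_cycle, hA.eigenvectorUnitary.prop.1, Matrix.one_mul,
    Matrix.trace_diagonal]

lemma conj_diag {d : ℕ} (A : Matrix (Fin d) (Fin d) ℂ) (hA : A.IsHermitian) (z : ℂ) (w : ℝ)
    (hw : ∀ i, ((w : ℂ) - hA.eigenvalues i) ≠ 0) :
    (1 : Matrix (Fin d) (Fin d) ℂ) + z • ((w : ℂ) • (1 : Matrix (Fin d) (Fin d) ℂ) - A)⁻¹ =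
      (hA.eigenvectorUnitary : Matrix (Fin d) (Fin d) ℂ) *
        Matrix.diagonal (fun i => 1 + z * ((w : ℂ) - hA.eigenvalues i)⁻¹) *
          (star hA.eigenvectorUnitary : Matrix (Fin d) (Fin d) ℂ) := by
  set U := (hA.eigenvectorUnitary : Matrix (Fin d) (Fin d) ℂ) with hU
  have hU1 : U * star U = 1 := hA.eigenvectorUnitary.prop.2
  have hU2 : star U * U = 1 := hA.eigenvectorUnitary.prop.1
  have hstep : (w : ℂ) • (1 : Matrix (Fin d) (Fin d) ℂ) - A =
      U * Matrix.diagonal (fun i => (w : ℂ) - hA.eigenvalues i) * star U := by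
    conv_lhs => rw [hA.spectral_theorem]
    rw [Matrix.smul_one_eq_diagonal]
    have h0 : Matrix.diagonal (fun _ : Fin d => (w : ℂ)) =
        U * Matrix.diagonal (fun _ : Fin d => (w : ℂ)) * star U := by
      rw [← Matrix.smul_one_eq_diagonal, Matrix.mul_smul, Matrix.mul_one, Matrix.smul_mul, hU1]
    rw [Unitary.conjStarAlgAut_apply]
    rw [h0, ← Matrix.sub_mul, ← Matrix.mul_sub, Matrix.diagonal_sub]
    rfl
  have hinv : ((w : ℂ) • (1 : Matrix (Fin d) (Fin d) ℂ) - A)⁻¹ =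
      U * Matrix.diagonal (fun i => ((w : ℂ) - hA.eigenvalues i)⁻¹) * star U := by
    rw [hstep]
    apply Matrix.inv_eq_right_inv
    simp only [Matrix.mul_assoc]
    rw [← Matrix.mul_assoc (star U) U, hU2, Matrix.one_mul,
      ← Matrix.mul_assoc (Matrix.diagonal _), Matrix.diagonal_mul_diagonal]
    have h1 : (fun i => ((w : ℂ) - hA.eigenvalues i) * ((w : ℂ) - hA.eigenvalues i)⁻¹) =
        fun _ : Fin d => (1 : ℂ) := by
      funext i; exact mul_inv_cancel₀ (hw i)
    rw [h1, Matrix.diagonal_one, Matrix.one_mul, hU1]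
  rw [hinv]
  have h1 : (1 : Matrix (Fin d) (Fin d) ℂ) = U * 1 * star U := by
    rw [Matrix.mul_one, hU1]
  conv_lhs => rw [h1]
  rw [← Matrix.smul_mul, ← Matrix.mul_smul, ← Matrix.add_mul, ← Matrix.mul_add]
  congr 2
  ext i j
  by_cases hij : i = j
  · subst hij
    simp [Matrix.diagonal_apply_eq, Matrix.one_apply_eq, mul_comm]
  · simp [Matrix.diagonal_apply_ne _ hij, Matrix.one_apply_ne hij]

lemma det_conj {d : ℕ} (A : Matrix (Fin d) (Fin d) ℂ) (hA : A.IsHermitian) (z : ℂ) (w : ℝ)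
    (hw : ∀ i, ((w : ℂ) - hA.eigenvalues i) ≠ 0) :
    ((1 : Matrix (Fin d) (Fin d) ℂ) + z • ((w : ℂ) • (1 : Matrix (Fin d) (Fin d) ℂ) - A)⁻¹).det =
      ∏ i, (1 + z * ((w : ℂ) - hA.eigenvalues i)⁻¹) := by
  rw [conj_diag A hA z w hw, Matrix.det_mul, Matrix.det_mul]
  have h : (hA.eigenvectorUnitary : Matrix (Fin d) (Fin d) ℂ).det *
      (star hA.eigenvectorUnitary : Matrix (Fin d) (Fin d) ℂ).det = 1 := by
    rw [← Matrix.det_mul, hA.eigenvectorUnitary.prop.2, Matrix.det_one]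
  calc (hA.eigenvectorUnitary : Matrix (Fin d) (Fin d) ℂ).det *
      (Matrix.diagonal (fun i => 1 + z * ((w : ℂ) - hA.eigenvalues i)⁻¹)).det *
      (star hA.eigenvectorUnitary : Matrix (Fin d) (Fin d) ℂ).det
      = (hA.eigenvectorUnitary : Matrix (Fin d) (Fin d) ℂ).det *
      (star hA.eigenvectorUnitary : Matrix (Fin d) (Fin d) ℂ).det *
      (Matrix.diagonal (fun i => 1 + z * ((w : ℂ) - hA.eigenvalues i)⁻¹)).det := by ring
    _ = _ := by rw [h, one_mul, Matrix.det_diagonal]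

lemma trace_matLog_re {d : ℕ} (B : Matrix (Fin d) (Fin d) ℂ) (hB : B.IsHermitian)
    (g : Fin d → ℝ) (hg : ∀ i, 0 < g i) (hdet : B.det = ((∏ i, g i : ℝ) : ℂ)) :
    (matLog B hB).trace.re = ∑ i, Real.log (g i) := by
  have hprod : ∏ i, hB.eigenvalues i = ∏ i, g i := by
    have h := hB.det_eq_prod_eigenvalues
    rw [hdet] at h
    norm_cast at h
    exact Complex.ofReal_injective h.symm
  have hprodpos : 0 < ∏ i, g i := Finset.prod_pos (fun i _ => hg i)
  have hne : ∀ i ∈ Finset.univ, hB.eigenvalues i ≠ 0 := by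
    rw [← Finset.prod_ne_zero_iff, hprod]
    exact ne_of_gt hprodpos
  have htr : (matLog B hB).trace.re = ∑ i, Real.log (hB.eigenvalues i) := by
    rw [trace_matLog]
    simp
  rw [htr, ← Real.log_prod hne, hprod, Real.log_prod
    (fun i _ => ne_of_gt (hg i))]

lemma key_ineq (d : ℕ) (hd : 0 < d) (c α t : ℝ) (hα : 0 < α) (hcα : α < c) (ht : c ≤ t) :
    (d : ℝ) * Real.log (1 + (α / d) / t) + Real.log (1 - α / (t + α / d)) ≥
      Real.log (1 - α ^ 2 / c ^ 2) := by
  have hd' : (0 : ℝ) < d := Nat.cast_pos.mpr hd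
  have hc0 : 0 < c := hα.trans hcα
  have ht0 : 0 < t := lt_of_lt_of_le hc0 ht
  have hαt : α < t := hcα.trans_le ht
  set δ := α / d with hδ
  have hδ0 : 0 < δ := div_pos hα hd'
  have h1 : Real.log (1 + α / t) ≤ (d : ℝ) * Real.log (1 + δ / t) := by
    rw [← Real.log_pow]
    apply Real.log_le_log (by positivity)
    have hb := one_add_mul_le_pow
      (le_trans (by norm_num : (-2 : ℝ) ≤ 0) (by positivity : (0:ℝ) ≤ δ / t)) d
    have heq : (d : ℝ) * (δ / t) = α / t := by
      field_simp [hδ]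
      rw [hδ]; field_simp
    rw [heq] at hb
    exact hb
  have h2 : Real.log (1 - α / t) ≤ Real.log (1 - α / (t + δ)) := by
    apply Real.log_le_log
    · have : α / t < 1 := (div_lt_one ht0).mpr hαt
      linarith
    · have : α / (t + δ) ≤ α / t := div_le_div_of_nonneg_left hα.le ht0 (by linarith)
      linarith
  have h3 : Real.log (1 - α ^ 2 / c ^ 2) ≤ Real.log (1 + α / t) + Real.log (1 - α / t) := by
    have hap : (0 : ℝ) < 1 + α / t := by positivity
    have ham : (0 : ℝ) < 1 - α / t := by
      have : α / t < 1 := (div_lt_one ht0).mpr hαt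
      linarith
    rw [← Real.log_mul (ne_of_gt hap) (ne_of_gt ham)]
    apply Real.log_le_log
    · have : α ^ 2 / c ^ 2 < 1 := by
        rw [div_lt_one (by positivity)]
        nlinarith
      linarith
    · have heq : (1 + α / t) * (1 - α / t) = 1 - α ^ 2 / t ^ 2 := by
        field_simp; ring
      rw [heq]
      have : α ^ 2 / t ^ 2 ≤ α ^ 2 / c ^ 2 :=
        div_le_div_of_nonneg_left (by positivity) (by positivity) (by nlinarith)
      linarith
  linarith

/-- Let `A ∈ ℂ^{d×d}` be Hermitian with eigenvalues `λ_i` satisfying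
`u − λ_i ≥ c > α > 0` for all `i`, and let `δ = α/d`.  Then
`(1/d)·[d·tr log(I + δ(uI−A)^{-1}) + tr log(I − α((u+δ)I−A)^{-1})]
  ≥ log(1 − α²/c²)`. -/
theorem stmt18 {d : ℕ} (hd : 0 < d) (A : Matrix (Fin d) (Fin d) ℂ)
    (hA : A.IsHermitian) (u c α δ : ℝ)
    (hgap : ∀ i, u - hA.eigenvalues i ≥ c)
    (hcα : c > α) (hα : 0 < α) (hδ : δ = α / d)
    (h1 : ((1 : Matrix (Fin d) (Fin d) ℂ) +
      (δ : ℂ) • ((u : ℂ) • (1 : Matrix (Fin d) (Fin d) ℂ) - A)⁻¹).IsHermitian)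
    (h2 : ((1 : Matrix (Fin d) (Fin d) ℂ) -
      (α : ℂ) • (((u + δ : ℝ) : ℂ) • (1 : Matrix (Fin d) (Fin d) ℂ) - A)⁻¹).IsHermitian) :
    (1 / (d : ℝ)) * ((d : ℝ) * (matLog _ h1).trace.re + (matLog _ h2).trace.re) ≥
      Real.log (1 - α ^ 2 / c ^ 2) := by
  have hd' : (0 : ℝ) < d := Nat.cast_pos.mpr hd
  have hc0 : 0 < c := hα.trans hcα
  have hδ0 : 0 < δ := hδ ▸ div_pos hα hd'
  have hgap1 : ∀ i, (0 : ℝ) < u - hA.eigenvalues i := fun i => lt_of_lt_of_le hc0 (hgap i)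
  have hgap2 : ∀ i, (0 : ℝ) < u + δ - hA.eigenvalues i := fun i => by
    have := hgap1 i; linarith
  -- first matrix
  have hw1 : ∀ i, ((u : ℂ) - hA.eigenvalues i) ≠ 0 := fun i => by
    have : (((u - hA.eigenvalues i : ℝ)) : ℂ) ≠ 0 := by
      exact_mod_cast ne_of_gt (hgap1 i)
    simpa using this
  have hw2 : ∀ i, (((u + δ : ℝ) : ℂ) - hA.eigenvalues i) ≠ 0 := fun i => by
    have : (((u + δ - hA.eigenvalues i : ℝ)) : ℂ) ≠ 0 := by
      exact_mod_cast ne_of_gt (hgap2 i)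
    simpa [sub_eq_iff_eq_add] using this
  have hdet1 : ((1 : Matrix (Fin d) (Fin d) ℂ) +
      (δ : ℂ) • ((u : ℂ) • (1 : Matrix (Fin d) (Fin d) ℂ) - A)⁻¹).det =
      ((∏ i, (1 + δ / (u - hA.eigenvalues i)) : ℝ) : ℂ) := by
    rw [det_conj A hA (δ : ℂ) u hw1]
    push_cast
    exact Finset.prod_congr rfl (fun i _ => by ring)
  have hdet2 : ((1 : Matrix (Fin d) (Fin d) ℂ) -
      (α : ℂ) • (((u + δ : ℝ) : ℂ) • (1 : Matrix (Fin d) (Fin d) ℂ) - A)⁻¹).det =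
      ((∏ i, (1 - α / (u + δ - hA.eigenvalues i)) : ℝ) : ℂ) := by
    rw [sub_eq_add_neg, ← neg_smul]
    rw [det_conj A hA (-(α : ℂ)) (u + δ) hw2]
    push_cast
    exact Finset.prod_congr rfl (fun i _ => by ring)
  have hg1 : ∀ i, 0 < 1 + δ / (u - hA.eigenvalues i) := fun i => by
    have := hgap1 i; positivity
  have hg2 : ∀ i, 0 < 1 - α / (u + δ - hA.eigenvalues i) := fun i => by
    have h := hgap2 i
    have hlt : α / (u + δ - hA.eigenvalues i) < 1 := by
      rw [div_lt_one h]
      have := hgap i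
      linarith
    linarith
  have htr1 := trace_matLog_re _ h1 _ hg1 hdet1
  have htr2 := trace_matLog_re _ h2 _ hg2 hdet2
  rw [htr1, htr2]
  have hkey : ∀ i, (d : ℝ) * Real.log (1 + δ / (u - hA.eigenvalues i)) +
      Real.log (1 - α / (u + δ - hA.eigenvalues i)) ≥ Real.log (1 - α ^ 2 / c ^ 2) := fun i => by
    have := key_ineq d hd c α (u - hA.eigenvalues i) hα hcα (hgap i)
    rw [← hδ] at this
    have harr : u + δ - hA.eigenvalues i = (u - hA.eigenvalues i) + δ := by ring
    rw [harr]
    exact this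
  have hsum : (d : ℝ) * ∑ i, Real.log (1 + δ / (u - hA.eigenvalues i)) +
      ∑ i, Real.log (1 - α / (u + δ - hA.eigenvalues i)) ≥
      (d : ℝ) * Real.log (1 - α ^ 2 / c ^ 2) := by
    rw [Finset.mul_sum, ← Finset.sum_add_distrib]
    calc ∑ i : Fin d, ((d : ℝ) * Real.log (1 + δ / (u - hA.eigenvalues i)) +
          Real.log (1 - α / (u + δ - hA.eigenvalues i)))
        ≥ ∑ _i : Fin d, Real.log (1 - α ^ 2 / c ^ 2) :=
          Finset.sum_le_sum (fun i _ => hkey i)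
      _ = (d : ℝ) * Real.log (1 - α ^ 2 / c ^ 2) := by
          rw [Finset.sum_const, Finset.card_univ, Fintype.card_fin, nsmul_eq_mul]
  rw [ge_iff_le, ← sub_nonneg]
  have : (1 / (d : ℝ)) * ((d : ℝ) * ∑ i, Real.log (1 + δ / (u - hA.eigenvalues i)) +
      ∑ i, Real.log (1 - α / (u + δ - hA.eigenvalues i))) - Real.log (1 - α ^ 2 / c ^ 2) =
      (1 / (d : ℝ)) * (((d : ℝ) * ∑ i, Real.log (1 + δ / (u - hA.eigenvalues i)) +
      ∑ i, Real.log (1 - α / (u + δ - hA.eigenvalues i))) -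
      (d : ℝ) * Real.log (1 - α ^ 2 / c ^ 2)) := by
    field_simp
  rw [this]
  apply mul_nonneg (by positivity)
  linarith [hsum]
end
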